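/- If n₀ ≥ 1 and the (j,j)-entry of C(z,w)^{n₀} has strictly smaller modulus than the (j,j)-entry of C(|z|,|w|)^{n₀} for some j, while all other entries satisfy |[C(z,w)^{n₀}]_{kl}| ≤ [C(|z|,|w|)^{n₀}]_{kl}, and C(|z|,|w|) is irreducible, then spr(C(z,w)) < spr(C(|z|,|w|)). -/

import Mathlib

open Matrix

/-- The spectral radius of a complex square matrix: the maximum modulus of its
eigenvalues (elements of its spectrum). -/
noncomputable def spr {n : Type*} [Fintype n] [DecidableEq n] (A : Matrix n n ℂ) : ℝ :=
  sSup ((‖·‖) '' spectrum ℂ A)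

/-- `C(z, w) = Σ_{i,j ∈ {−1,0,1}} A_{i,j} z^i w^j` for complex `z, w`. -/
noncomputable def Cc {S : Type*} [Fintype S] (A : ℤ → ℤ → Matrix S S ℝ) (z w : ℂ) :
    Matrix S S ℂ :=
  ∑ i ∈ Finset.Icc (-1 : ℤ) 1, ∑ j ∈ Finset.Icc (-1 : ℤ) 1,
    (z ^ i * w ^ j) • (A i j).map Complex.ofReal

/-- `C(x, y) = Σ_{i,j ∈ {−1,0,1}} A_{i,j} x^i y^j` for real `x, y`. -/
noncomputable def Cr {S : Type*} [Fintype S] (A : ℤ → ℤ → Matrix S S ℝ) (x y : ℝ) :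
    Matrix S S ℝ :=
  ∑ i ∈ Finset.Icc (-1 : ℤ) 1, ∑ j ∈ Finset.Icc (-1 : ℤ) 1, (x ^ i * y ^ j) • A i j

section Helpers

open Polynomial

lemma charpoly_eval_eq_det {n : Type*} [Fintype n] [DecidableEq n] (Q : Matrix n n ℂ) (μ : ℂ) :
    (Matrix.charpoly Q).eval μ = (Matrix.scalar n μ - Q).det := by
  rw [Matrix.charpoly, _root_.eval_det, Matrix.matPolyEquiv_charmatrix]
  simp

lemma mem_spectrum_iff_root {n : Type*} [Fintype n] [DecidableEq n] (Q : Matrix n n ℂ) (μ : ℂ) :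
    μ ∈ spectrum ℂ Q ↔ (Matrix.charpoly Q).IsRoot μ := by
  rw [spectrum.mem_iff, Matrix.isUnit_iff_isUnit_det, isUnit_iff_ne_zero, not_not,
    Polynomial.IsRoot, charpoly_eval_eq_det]
  constructor
  · intro h; rw [← h]; congr 1
  · intro h; rw [← h]; congr 1

lemma exists_eigenvector {n : Type*} [Fintype n] [DecidableEq n] {Q : Matrix n n ℂ} {μ : ℂ}
    (hμ : μ ∈ spectrum ℂ Q) : ∃ x, x ≠ 0 ∧ Q *ᵥ x = μ • x := by
  rw [mem_spectrum_iff_root, Polynomial.IsRoot, charpoly_eval_eq_det] at hμ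
  obtain ⟨v, hv, hv2⟩ := (Matrix.exists_mulVec_eq_zero_iff).2 hμ
  refine ⟨v, hv, ?_⟩
  have : (Matrix.scalar n μ) *ᵥ v - Q *ᵥ v = 0 := by rw [← Matrix.sub_mulVec]; exact hv2
  have h2 : (Matrix.scalar n μ) *ᵥ v = μ • v := by
    ext k; simp [Matrix.scalar, Matrix.mulVec_diagonal]
  rw [h2] at this
  exact (sub_eq_zero.mp this).symm

lemma spectrum_nonempty' {n : Type*} [Fintype n] [DecidableEq n] [Nonempty n]
    (Q : Matrix n n ℂ) : (spectrum ℂ Q).Nonempty := by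
  have hdeg : (Matrix.charpoly Q).degree ≠ 0 := by
    rw [Polynomial.degree_eq_natDegree (Matrix.charpoly_monic Q).ne_zero,
      Matrix.charpoly_natDegree_eq_dim]
    exact_mod_cast Fintype.card_pos.ne'
  obtain ⟨μ, hμ⟩ := IsAlgClosed.exists_root (Matrix.charpoly Q) hdeg
  exact ⟨μ, (mem_spectrum_iff_root Q μ).2 hμ⟩

lemma abs_le_spr {n : Type*} [Fintype n] [DecidableEq n] {Q : Matrix n n ℂ} {μ : ℂ}
    (hμ : μ ∈ spectrum ℂ Q) : ‖μ‖ ≤ spr Q :=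
  le_csSup ((Matrix.finite_spectrum Q).image _).bddAbove ⟨μ, hμ, rfl⟩

lemma spr_nonneg {n : Type*} [Fintype n] [DecidableEq n] [Nonempty n] (Q : Matrix n n ℂ) :
    0 ≤ spr Q := by
  obtain ⟨μ, hμ⟩ := spectrum_nonempty' Q
  exact le_trans (norm_nonneg _) (abs_le_spr hμ)

lemma exists_spr_eq {n : Type*} [Fintype n] [DecidableEq n] [Nonempty n] (Q : Matrix n n ℂ) :
    ∃ μ ∈ spectrum ℂ Q, ‖μ‖ = spr Q := by
  obtain ⟨y, hy, h⟩ := ((spectrum_nonempty' Q).image (‖·‖)).csSup_mem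
    ((Matrix.finite_spectrum Q).image _)
  exact ⟨y, hy, h⟩

lemma multiset_abs_sum_le (s : Multiset ℂ) : ‖s.sum‖ ≤ (s.map (‖·‖)).sum := by
  induction s using Multiset.induction_on with
  | empty => simp
  | cons a s ih =>
    simp only [Multiset.sum_cons, Multiset.map_cons]
    exact le_trans (norm_add_le _ _) (by gcongr)

lemma trace_pow_le {S : Type*} [Fintype S] [DecidableEq S] [Nonempty S]
    (P : Matrix S S ℝ) (hP : ∀ k l, 0 ≤ P k l) {m : ℕ} (hm : 1 ≤ m) :
    Matrix.trace (P ^ m) ≤ (Fintype.card S : ℝ) * spr (P.map Complex.ofReal) ^ m := by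
  set Pc := P.map Complex.ofReal with hPc
  set r := spr Pc with hrdef
  have hr0 : 0 ≤ r := spr_nonneg _
  have hmap : (P ^ m).map Complex.ofReal = Pc ^ m := by
    have := map_pow (Complex.ofRealHom.mapMatrix (m := S)) P m
    exact this
  have htr : (Matrix.trace (Pc ^ m) : ℂ) = ((Matrix.trace (P ^ m) : ℝ) : ℂ) := by
    rw [← hmap]
    simp [Matrix.trace, Matrix.diag, Matrix.map_apply]
  have hroots : Matrix.trace (Pc ^ m) = ((Pc ^ m).charpoly).roots.sum :=
    Matrix.trace_eq_sum_roots_charpoly _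
  have hbound : ∀ μ ∈ ((Pc ^ m).charpoly).roots, ‖μ‖ ≤ r ^ m := by
    intro μ hμ
    have hspec : μ ∈ spectrum ℂ (Pc ^ m) :=
      (mem_spectrum_iff_root _ _).2 (Polynomial.isRoot_of_mem_roots hμ)
    rw [spectrum.map_pow_of_pos Pc (lt_of_lt_of_le one_pos hm)] at hspec
    obtain ⟨lam, hlam, rfl⟩ := hspec
    rw [norm_pow]
    exact pow_le_pow_left₀ (norm_nonneg _) (abs_le_spr hlam) m
  have h1 : ‖Matrix.trace (Pc ^ m)‖ ≤ (Fintype.card S : ℝ) * r ^ m := by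
    rw [hroots]
    refine le_trans (multiset_abs_sum_le _) ?_
    refine le_trans (Multiset.sum_le_card_nsmul _ (r ^ m) ?_) ?_
    · intro x hx
      obtain ⟨μ, hμ, rfl⟩ := Multiset.mem_map.1 hx
      exact hbound μ hμ
    · rw [Multiset.card_map, nsmul_eq_mul]
      refine mul_le_mul_of_nonneg_right ?_ (by positivity)
      exact_mod_cast le_trans (Polynomial.card_roots' _) (le_of_eq (Matrix.charpoly_natDegree_eq_dim _))
  calc Matrix.trace (P ^ m) ≤ |Matrix.trace (P ^ m)| := le_abs_self _
    _ = ‖((Matrix.trace (P ^ m) : ℝ) : ℂ)‖ := (by rw [Complex.norm_real, Real.norm_eq_abs])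
    _ = ‖Matrix.trace (Pc ^ m)‖ := by rw [htr]
    _ ≤ _ := h1

lemma geom_bound {a C K1 K2 : ℝ} (ha : 0 ≤ a) (hK1 : 0 < K1)
    (h : ∀ m : ℕ, K1 * C ^ m ≤ K2 * a ^ m) : C ≤ a := by
  by_contra hlt
  push_neg at hlt
  have hC0 : 0 < C := lt_of_le_of_lt ha hlt
  have hK2 : 0 < K2 := by have := h 0; simp at this; linarith
  have hrat : a / C < 1 := (div_lt_one hC0).2 hlt
  have hrat0 : 0 ≤ a / C := div_nonneg ha hC0.le
  have htend := tendsto_pow_atTop_nhds_zero_of_lt_one hrat0 hrat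
  obtain ⟨m, hm⟩ := (htend.eventually_lt_const (show (0:ℝ) < K1 / K2 by positivity)).exists
  have hge : K1 / K2 ≤ (a / C) ^ m := by
    rw [div_pow, div_le_div_iff₀ hK2 (pow_pos hC0 m)]
    nlinarith [h m]
  linarith

lemma pow_entry_nonneg {S : Type*} [Fintype S] [DecidableEq S] {B : Matrix S S ℝ}
    (hB : ∀ k l, 0 ≤ B k l) (n : ℕ) : ∀ k l, 0 ≤ (B ^ n) k l := by
  induction n with
  | zero => intro k l; simp [Matrix.one_apply]; split <;> norm_num
  | succ n ih =>
    intro k l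
    rw [pow_succ, Matrix.mul_apply]
    exact Finset.sum_nonneg fun i _ => mul_nonneg (ih k i) (hB i l)

lemma single_le_mulVec {S : Type*} [Fintype S] {P : Matrix S S ℝ} {u : S → ℝ}
    (hP : ∀ k l, 0 ≤ P k l) (hu : ∀ k, 0 ≤ u k) (k l0 : S) :
    P k l0 * u l0 ≤ (P *ᵥ u) k := by
  rw [Matrix.mulVec, dotProduct]
  exact Finset.single_le_sum (fun i _ => mul_nonneg (hP k i) (hu i)) (Finset.mem_univ l0)

lemma entry_mul_entry_le {S : Type*} [Fintype S] [DecidableEq S] {B : Matrix S S ℝ}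
    (hB : ∀ k l, 0 ≤ B k l) (a b : ℕ) (k l j : S) :
    (B ^ a) k l * (B ^ b) l j ≤ (B ^ (a + b)) k j := by
  rw [pow_add, Matrix.mul_apply]
  exact Finset.single_le_sum
    (fun i _ => mul_nonneg (pow_entry_nonneg hB a k i) (pow_entry_nonneg hB b i j))
    (Finset.mem_univ l)

lemma diag_le_trace {S : Type*} [Fintype S] {P : Matrix S S ℝ}
    (hP : ∀ k l, 0 ≤ P k l) (j : S) : P j j ≤ Matrix.trace P :=
  Finset.single_le_sum (fun i _ => hP i i) (Finset.mem_univ j)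

lemma spr_pos {S : Type*} [Fintype S] [DecidableEq S] [Nonempty S] {B : Matrix S S ℝ}
    (hB : ∀ k l, 0 ≤ B k l) {n : ℕ} {j : S} (hn : 0 < n) (hpos : 0 < (B ^ n) j j) :
    0 < spr (B.map Complex.ofReal) := by
  set r := spr (B.map Complex.ofReal) with hrdef
  have hr0 : 0 ≤ r := spr_nonneg _
  have hdiag : ∀ m : ℕ, ((B ^ n) j j) ^ m ≤ (B ^ (n * m)) j j := by
    intro m
    induction m with
    | zero => simp [pow_zero, Matrix.one_apply]
    | succ m ih =>
      have h1 : (B ^ (n * m)) j j * (B ^ n) j j ≤ (B ^ (n * m + n)) j j :=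
        entry_mul_entry_le hB _ _ j j j
      have h2 : ((B ^ n) j j) ^ (m + 1) = ((B ^ n) j j) ^ m * (B ^ n) j j := pow_succ _ _
      rw [h2, Nat.mul_succ]
      exact le_trans (mul_le_mul_of_nonneg_right ih (le_of_lt hpos)) h1
  have key : ∀ m : ℕ, 1 * ((B ^ n) j j) ^ m ≤ (Fintype.card S : ℝ) * (r ^ n) ^ m := by
    intro m
    rcases Nat.eq_zero_or_pos m with rfl | hm
    · simp; exact_mod_cast Fintype.card_pos
    · rw [one_mul, ← pow_mul]
      calc ((B ^ n) j j) ^ m ≤ (B ^ (n * m)) j j := hdiag m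
        _ ≤ Matrix.trace (B ^ (n * m)) := diag_le_trace (pow_entry_nonneg hB _) j
        _ ≤ (Fintype.card S : ℝ) * r ^ (n * m) :=
            trace_pow_le B hB (Nat.one_le_iff_ne_zero.2 (by positivity))
  have hle : (B ^ n) j j ≤ r ^ n := geom_bound (by positivity) one_pos key
  have hrn : 0 < r ^ n := lt_of_lt_of_le hpos hle
  rcases hr0.lt_or_eq with h | h
  · exact h
  · rw [← h] at hrn; rw [zero_pow hn.ne'] at hrn; linarith

lemma mulVec_mono {S : Type*} [Fintype S] {P : Matrix S S ℝ} {v v' : S → ℝ}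
    (hP : ∀ k l, 0 ≤ P k l) (h : ∀ k, v k ≤ v' k) (k : S) :
    (P *ᵥ v) k ≤ (P *ᵥ v') k := by
  simp only [Matrix.mulVec, dotProduct]
  exact Finset.sum_le_sum fun i _ => mul_le_mul_of_nonneg_left (h i) (hP k i)

lemma mulVec_pow_ge {S : Type*} [Fintype S] [DecidableEq S] {B : Matrix S S ℝ}
    (hB : ∀ k l, 0 ≤ B k l) {w : S → ℝ} (hw : ∀ k, 0 ≤ w k) {c : ℝ} (hc : 0 ≤ c)
    (hsub : ∀ k, c * w k ≤ (B *ᵥ w) k) :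
    ∀ m k, c ^ m * w k ≤ ((B ^ m) *ᵥ w) k := by
  intro m
  induction m with
  | zero => intro k; simp
  | succ m ih =>
    intro k
    have h1 : ((B ^ (m + 1)) *ᵥ w) k = ((B ^ m) *ᵥ (B *ᵥ w)) k := by
      rw [pow_succ, ← Matrix.mulVec_mulVec]
    have h2 : ((B ^ m) *ᵥ (fun l => c * w l)) k ≤ ((B ^ m) *ᵥ (B *ᵥ w)) k :=
      mulVec_mono (pow_entry_nonneg hB m) hsub k
    have h3 : ((B ^ m) *ᵥ (fun l => c * w l)) k = c * (((B ^ m) *ᵥ w) k) := by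
      simp only [Matrix.mulVec, dotProduct]
      rw [Finset.mul_sum]; congr 1; ext i; ring
    have h4 : c ^ (m + 1) * w k = c * (c ^ m * w k) := by ring
    rw [h1, h4]
    calc c * (c ^ m * w k) ≤ c * ((B ^ m *ᵥ w) k) := mul_le_mul_of_nonneg_left (ih k) hc
      _ = (B ^ m *ᵥ fun l => c * w l) k := h3.symm
      _ ≤ _ := h2

lemma cw_lower {S : Type*} [Fintype S] [DecidableEq S] [Nonempty S] {B : Matrix S S ℝ}
    (hB : ∀ k l, 0 ≤ B k l)
    (hirr : ∀ k l, ∃ n : ℕ, 0 < n ∧ 0 < (B ^ n) k l)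
    {w : S → ℝ} (hw : ∀ k, 0 < w k) {c : ℝ} (hc : 0 ≤ c)
    (hsub : ∀ k, c * w k ≤ (B *ᵥ w) k) : c ≤ spr (B.map Complex.ofReal) := by
  classical
  set r := spr (B.map Complex.ofReal) with hrdef
  have hr0 : 0 ≤ r := spr_nonneg _
  obtain ⟨k0⟩ : Nonempty S := inferInstance
  choose nf hnfpos hnfval using fun l => hirr l k0
  set N := Finset.univ.sup nf with hN
  set δ := Finset.univ.inf' Finset.univ_nonempty (fun l => (B ^ (nf l)) l k0) with hδ
  have hδpos : 0 < δ := by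
    rw [hδ]; exact (Finset.lt_inf'_iff _).2 fun l _ => hnfval l
  set wmin := Finset.univ.inf' Finset.univ_nonempty w with hwmin
  set wmax := Finset.univ.sup' Finset.univ_nonempty w with hwmax
  have hwminpos : 0 < wmin := by
    rw [hwmin]; exact (Finset.lt_inf'_iff _).2 fun l _ => hw l
  have hwmaxpos : 0 < wmax := lt_of_lt_of_le (hw k0) (Finset.le_sup' _ (Finset.mem_univ k0))
  set M1 := max 1 r with hM1
  have hM1pos : (0:ℝ) < M1 := lt_of_lt_of_le one_pos (le_max_left _ _)
  set s := (Fintype.card S : ℝ) with hs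
  have hspos : 0 < s := by rw [hs]; exact_mod_cast Fintype.card_pos
  have key : ∀ m : ℕ, (δ * wmin) * c ^ m ≤ (s * s * wmax * M1 ^ N) * r ^ m := by
    intro m
    -- step 1: sum over row k0 of B^m dominates c^m * wmin / wmax
    have hpow := mulVec_pow_ge hB (fun k => (hw k).le) hc hsub m k0
    -- find the max entry of row k0
    obtain ⟨lst, _, hlst⟩ := Finset.exists_mem_eq_sup' (Finset.univ_nonempty (α := S))
      (fun l => (B ^ m) k0 l)
    have hrow : c ^ m * wmin ≤ s * ((B ^ m) k0 lst) * wmax := by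
      have h1 : c ^ m * wmin ≤ ((B ^ m) *ᵥ w) k0 := by
        refine le_trans ?_ hpow
        refine mul_le_mul_of_nonneg_left ?_ (by positivity)
        exact Finset.inf'_le _ (Finset.mem_univ k0)
      have h2 : ((B ^ m) *ᵥ w) k0 ≤ (∑ l, (B ^ m) k0 l) * wmax := by
        simp only [Matrix.mulVec, dotProduct, Finset.sum_mul]
        refine Finset.sum_le_sum fun l _ => ?_
        exact mul_le_mul_of_nonneg_left (Finset.le_sup' _ (Finset.mem_univ l))
          (pow_entry_nonneg hB m k0 l)
      have h3 : (∑ l, (B ^ m) k0 l) ≤ s * ((B ^ m) k0 lst) := by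
        rw [hs]
        calc (∑ l, (B ^ m) k0 l) ≤ ∑ _l : S, (B ^ m) k0 lst := by
              refine Finset.sum_le_sum fun l _ => ?_
              rw [← hlst]; exact Finset.le_sup' _ (Finset.mem_univ l)
          _ = (Fintype.card S : ℝ) * (B ^ m) k0 lst := by
              rw [Finset.sum_const, Finset.card_univ, nsmul_eq_mul]
      calc c ^ m * wmin ≤ ((B ^ m) *ᵥ w) k0 := h1
        _ ≤ (∑ l, (B ^ m) k0 l) * wmax := h2
        _ ≤ s * ((B ^ m) k0 lst) * wmax :=
            mul_le_mul_of_nonneg_right h3 hwmaxpos.le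
    -- step 2: diagonal entry bound
    have hdiag : (B ^ m) k0 lst * δ ≤ (B ^ (m + nf lst)) k0 k0 := by
      refine le_trans ?_ (entry_mul_entry_le hB m (nf lst) k0 lst k0)
      refine mul_le_mul_of_nonneg_left ?_ (pow_entry_nonneg hB m k0 lst)
      exact Finset.inf'_le _ (Finset.mem_univ lst)
    -- step 3: trace bound
    have htr : (B ^ (m + nf lst)) k0 k0 ≤ s * r ^ m * M1 ^ N := by
      calc (B ^ (m + nf lst)) k0 k0 ≤ Matrix.trace (B ^ (m + nf lst)) :=
            diag_le_trace (pow_entry_nonneg hB _) k0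
        _ ≤ s * r ^ (m + nf lst) :=
            trace_pow_le B hB (le_trans (hnfpos lst) (Nat.le_add_left _ _))
        _ ≤ s * r ^ m * M1 ^ N := by
            rw [pow_add, ← mul_assoc]
            refine mul_le_mul_of_nonneg_left ?_ (by positivity)
            calc r ^ nf lst ≤ M1 ^ nf lst :=
                  pow_le_pow_left₀ hr0 (le_max_right 1 r) _
              _ ≤ M1 ^ N := pow_le_pow_right₀ (le_max_left 1 r) (Finset.le_sup (Finset.mem_univ lst))
    calc (δ * wmin) * c ^ m = (c ^ m * wmin) * δ := by ring
      _ ≤ (s * ((B ^ m) k0 lst) * wmax) * δ := mul_le_mul_of_nonneg_right hrow hδpos.le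
      _ = s * wmax * ((B ^ m) k0 lst * δ) := by ring
      _ ≤ s * wmax * (B ^ (m + nf lst)) k0 k0 :=
          mul_le_mul_of_nonneg_left hdiag (by positivity)
      _ ≤ s * wmax * (s * r ^ m * M1 ^ N) :=
          mul_le_mul_of_nonneg_left htr (by positivity)
      _ = (s * s * wmax * M1 ^ N) * r ^ m := by ring
  exact geom_bound hr0 (by positivity) key



lemma Cr_nonneg {S : Type*} [Fintype S] (A : ℤ → ℤ → Matrix S S ℝ)
    (hnn : ∀ i j k l, 0 ≤ A i j k l) {x y : ℝ} (hx : 0 ≤ x) (hy : 0 ≤ y) :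
    ∀ k l, 0 ≤ Cr A x y k l := by
  intro k l
  simp only [Cr, Matrix.sum_apply, Matrix.smul_apply, smul_eq_mul]
  refine Finset.sum_nonneg fun i _ => Finset.sum_nonneg fun j _ => ?_
  exact mul_nonneg (mul_nonneg (zpow_nonneg hx i) (zpow_nonneg hy j)) (hnn i j k l)

lemma abs_Cc_le_Cr {S : Type*} [Fintype S] (A : ℤ → ℤ → Matrix S S ℝ)
    (hnn : ∀ i j k l, 0 ≤ A i j k l) (z w : ℂ) :
    ∀ k l, ‖Cc A z w k l‖ ≤ Cr A (‖z‖) (‖w‖) k l := by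
  intro k l
  simp only [Cc, Cr, Matrix.sum_apply, Matrix.smul_apply, Matrix.map_apply, smul_eq_mul]
  refine le_trans (norm_sum_le _ _) ?_
  refine Finset.sum_le_sum fun i _ => ?_
  refine le_trans (norm_sum_le _ _) ?_
  refine Finset.sum_le_sum fun j _ => ?_
  rw [norm_mul, norm_mul, norm_zpow, norm_zpow, Complex.norm_real, Real.norm_eq_abs, abs_of_nonneg (hnn i j k l)]

end Helpers

/-- If `n₀ ≥ 1`, every entry of `C(z,w)^{n₀}` is dominated in modulus by the corresponding
entry of `C(|z|,|w|)^{n₀}`, the `(j,j)`-entry is strictly smaller in modulus for some `j`,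
and `C(|z|,|w|)` is irreducible, then `spr(C(z,w)) < spr(C(|z|,|w|))`. -/
theorem stmt9 {S : Type*} [Fintype S] [DecidableEq S]
    (A : ℤ → ℤ → Matrix S S ℝ) (hnn : ∀ i j k l, 0 ≤ A i j k l)
    (z w : ℂ) (hz : z ≠ 0) (hw : w ≠ 0) (n₀ : ℕ) (hn₀ : 1 ≤ n₀)
    (hle : ∀ k l, ‖((Cc A z w) ^ n₀) k l‖ ≤
      ((Cr A (‖z‖) (‖w‖)) ^ n₀) k l)
    (hstrict : ∃ j, ‖((Cc A z w) ^ n₀) j j‖ <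
      ((Cr A (‖z‖) (‖w‖)) ^ n₀) j j)
    (hirr : ∀ k l, ∃ n : ℕ, 0 < n ∧ 0 < ((Cr A (‖z‖) (‖w‖)) ^ n) k l) :
    spr (Cc A z w) < spr ((Cr A (‖z‖) (‖w‖)).map Complex.ofReal) := by
  classical
  obtain ⟨j0, hj0⟩ := hstrict
  haveI : Nonempty S := ⟨j0⟩
  set B := Cr A (‖z‖) (‖w‖) with hBdef
  set M := Cc A z w with hMdef
  have hBnn : ∀ k l, 0 ≤ B k l :=
    Cr_nonneg A hnn (norm_nonneg _) (norm_nonneg _)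
  have hdom : ∀ k l, ‖M k l‖ ≤ B k l := abs_Cc_le_Cr A hnn z w
  set r := spr (B.map Complex.ofReal) with hrdef
  have hr0 : 0 ≤ r := spr_nonneg _
  have hrpos : 0 < r := by
    obtain ⟨n, hn, hpos⟩ := hirr j0 j0
    exact spr_pos hBnn hn hpos
  obtain ⟨lam, hlam_mem, hlam_eq⟩ := exists_spr_eq M
  rw [← hlam_eq]
  by_contra hge
  push_neg at hge
  obtain ⟨x, hx0, hxe⟩ := exists_eigenvector hlam_mem
  set ρ := ‖lam‖ with hρ
  set u := fun k => ‖x k‖ with hu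
  have hu0 : ∀ k, 0 ≤ u k := fun k => norm_nonneg _
  obtain ⟨k0, hk0⟩ : ∃ k, 0 < u k := by
    by_contra h
    push_neg at h
    refine hx0 (funext fun k => ?_)
    have h1 : u k = 0 := le_antisymm (h k) (hu0 k)
    exact norm_eq_zero.1 h1
  have hxe_pow : ∀ t : ℕ, (M ^ t) *ᵥ x = (lam ^ t) • x := by
    intro t
    induction t with
    | zero => simp
    | succ t ih =>
      rw [pow_succ', ← Matrix.mulVec_mulVec, ih, Matrix.mulVec_smul, hxe, smul_smul,
        ← pow_succ]
  have habs : ∀ (Q : Matrix S S ℂ) (P : Matrix S S ℝ), (∀ k l, ‖Q k l‖ ≤ P k l) →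
      ∀ k, ‖(Q *ᵥ x) k‖ ≤ (P *ᵥ u) k := by
    intro Q P hQP k
    simp only [Matrix.mulVec, dotProduct]
    refine le_trans (norm_sum_le _ _) (Finset.sum_le_sum fun l _ => ?_)
    rw [norm_mul]
    exact mul_le_mul_of_nonneg_right (hQP k l) (hu0 l)
  have hsub : ∀ k, ρ * u k ≤ (B *ᵥ u) k := by
    intro k
    have h1 : ‖(M *ᵥ x) k‖ = ρ * u k := by
      rw [hxe]
      simp only [Pi.smul_apply, smul_eq_mul, norm_mul, hu, hρ]
    rw [← h1]
    exact habs M B hdom k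
  have hsubr : ∀ k, r * u k ≤ (B *ᵥ u) k := fun k =>
    le_trans (mul_le_mul_of_nonneg_right hge (hu0 k)) (hsub k)
  by_cases hcase : ∀ k, (B *ᵥ u) k = r * u k
  · -- Case A : `u` is an exact eigenvector for `r`
    have hBtu : ∀ t : ℕ, ∀ k, ((B ^ t) *ᵥ u) k = r ^ t * u k := by
      intro t
      induction t with
      | zero => intro k; simp
      | succ t ih =>
        intro k
        have h1 : ((B ^ (t + 1)) *ᵥ u) k = (B *ᵥ ((B ^ t) *ᵥ u)) k := by
          rw [pow_succ', ← Matrix.mulVec_mulVec]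
        have hv : (B ^ t) *ᵥ u = fun l => r ^ t * u l := funext ih
        have h2 : (B *ᵥ ((B ^ t) *ᵥ u)) k = r ^ t * ((B *ᵥ u) k) := by
          rw [hv]
          simp only [Matrix.mulVec, dotProduct, Finset.mul_sum]
          refine Finset.sum_congr rfl fun l _ => ?_
          ring
        rw [h1, h2, hcase k]
        ring
    have hupos : ∀ l, 0 < u l := by
      intro l
      obtain ⟨n, hn, hp⟩ := hirr l k0
      have h1 : (B ^ n) l k0 * u k0 ≤ ((B ^ n) *ᵥ u) l :=
        single_le_mulVec (pow_entry_nonneg hBnn n) hu0 l k0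
      rw [hBtu n l] at h1
      nlinarith [pow_pos hrpos n, mul_pos hp hk0]
    have hstep : ρ ^ n₀ * u j0 < ((B ^ n₀) *ᵥ u) j0 := by
      have h1 : ‖((M ^ n₀) *ᵥ x) j0‖ = ρ ^ n₀ * u j0 := by
        rw [hxe_pow n₀]
        simp only [Pi.smul_apply, smul_eq_mul, norm_mul, norm_pow, hu, hρ]
      rw [← h1]
      simp only [Matrix.mulVec, dotProduct]
      refine lt_of_le_of_lt (norm_sum_le _ _) ?_
      refine Finset.sum_lt_sum (fun l _ => ?_) ⟨j0, Finset.mem_univ j0, ?_⟩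
      · rw [norm_mul]
        exact mul_le_mul_of_nonneg_right (hle j0 l) (hu0 l)
      · rw [norm_mul]
        exact mul_lt_mul_of_pos_right hj0 (hupos j0)
    have h3 := hBtu n₀ j0
    have h4 : r ^ n₀ * u j0 ≤ ρ ^ n₀ * u j0 :=
      mul_le_mul_of_nonneg_right (pow_le_pow_left₀ hr0 hge n₀) (hu0 j0)
    rw [h3] at hstep
    linarith
  · -- Case B : strict subinvariance somewhere, amplify to a positive vector
    push_neg at hcase
    obtain ⟨kst, hkst⟩ := hcase
    set d := fun l => (B *ᵥ u) l - r * u l with hd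
    have hd0 : ∀ l, 0 ≤ d l := fun l => by
      simp only [hd]; linarith [hsubr l]
    have hdk : 0 < d kst := by
      simp only [hd]
      exact sub_pos.2 (lt_of_le_of_ne (hsubr kst) (Ne.symm hkst))
    choose nf hnfpos hnfval using fun k => hirr k k0
    choose mf hmfpos hmfval using fun k => hirr k kst
    set N := (Finset.univ.sup nf) ⊔ (Finset.univ.sup mf) with hN
    set P := ∑ t ∈ Finset.range (N + 1), B ^ t with hP
    have hPnn : ∀ k l, 0 ≤ P k l := by
      intro k l
      rw [hP]
      simp only [Matrix.sum_apply]
      exact Finset.sum_nonneg fun t _ => pow_entry_nonneg hBnn t k l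
    have hPge : ∀ t, t ≤ N → ∀ k l, (B ^ t) k l ≤ P k l := by
      intro t ht k l
      rw [hP]
      simp only [Matrix.sum_apply]
      exact Finset.single_le_sum (f := fun t => (B ^ t) k l)
        (fun i _ => pow_entry_nonneg hBnn i k l) (Finset.mem_range.2 (Nat.lt_succ_of_le ht))
    set wv := P *ᵥ u with hwv
    have hwpos : ∀ k, 0 < wv k := by
      intro k
      have h1 : (B ^ nf k) k k0 * u k0 ≤ P k k0 * u k0 :=
        mul_le_mul_of_nonneg_right
          (hPge (nf k) (le_trans (Finset.le_sup (Finset.mem_univ k)) le_sup_left) k k0) (hu0 k0)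
      have h2 : P k k0 * u k0 ≤ (P *ᵥ u) k := single_le_mulVec hPnn hu0 k k0
      have h3 : 0 < (B ^ nf k) k k0 * u k0 := mul_pos (hnfval k) hk0
      rw [hwv]
      linarith
    have hcomm : B * P = P * B := by
      rw [hP, Finset.mul_sum, Finset.sum_mul]
      refine Finset.sum_congr rfl fun t _ => ?_
      rw [← pow_succ', ← pow_succ]
    have hBwv : ∀ k, (B *ᵥ wv) k = (P *ᵥ (B *ᵥ u)) k := by
      intro k
      rw [hwv, Matrix.mulVec_mulVec, hcomm, ← Matrix.mulVec_mulVec]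
    have hstrict2 : ∀ k, r * wv k < (B *ᵥ wv) k := by
      intro k
      have hdvec : d = (B *ᵥ u) - r • u := by
        funext l
        simp [hd]
      have h1 : (B *ᵥ wv) k - r * wv k = (P *ᵥ d) k := by
        rw [hBwv k, hwv, hdvec, Matrix.mulVec_sub, Matrix.mulVec_smul]
        simp
      have hPk : 0 < P k kst :=
        lt_of_lt_of_le (hmfval k)
          (hPge (mf k) (le_trans (Finset.le_sup (Finset.mem_univ k)) le_sup_right) k kst)
      have h2 : 0 < (P *ᵥ d) k := by
        have h3 : P k kst * d kst ≤ (P *ᵥ d) k := single_le_mulVec hPnn hd0 k kst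
        nlinarith [mul_pos hPk hdk]
      linarith
    set c := Finset.univ.inf' Finset.univ_nonempty (fun k => (B *ᵥ wv) k / wv k) with hc
    have hcgt : r < c := by
      rw [hc]
      refine (Finset.lt_inf'_iff _).2 fun k _ => ?_
      rw [lt_div_iff₀ (hwpos k)]
      linarith [hstrict2 k]
    have hcsub : ∀ k, c * wv k ≤ (B *ᵥ wv) k := by
      intro k
      have h1 : c ≤ (B *ᵥ wv) k / wv k := by
        rw [hc]
        exact Finset.inf'_le _ (Finset.mem_univ k)
      rw [le_div_iff₀ (hwpos k)] at h1
      linarith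
    have hfin := cw_lower hBnn hirr hwpos (le_of_lt (lt_of_le_of_lt hr0 hcgt)) hcsub
    linarith
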